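/- Logarithmic penalty formula: let N ≥ 1, γ > 0, budgets b i > 0, and reals pε i, p* i for each i ∈ Fin N. Then sup over s with 0 < s i ≤ b i for all i of ∑ i, ( pε i · s i + γ·log(s i / b i) - p* i · s i ) = ∑ i, |pε i · b i - p* i · b i|_γ, where |x|_γ = x if x ≥ -γ and |x|_γ = -γ + γ·log(γ / (-x)) if x < -γ. -/

import Mathlib

/-- Single-variable bound: for `0 < s ≤ b`, `c*s + γ*log(s/b)` is at most the
logarithmic penalty value of `x = c*b`. -/
lemma stmt13_key {γ b s : ℝ} (c : ℝ) (hγ : 0 < γ) (hb : 0 < b) (hs : 0 < s) (hsb : s ≤ b) :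
    c * s + γ * Real.log (s / b) ≤
      if -γ ≤ c * b then c * b else -γ + γ * Real.log (γ / (-(c * b))) := by
  split_ifs with h
  · have hlog : Real.log (s / b) ≤ s / b - 1 :=
      Real.log_le_sub_one_of_pos (by positivity)
    have h1 : γ * Real.log (s / b) ≤ γ * (s / b - 1) := by nlinarith
    have h2 : γ * (s / b - 1) = γ * (s - b) / b := by field_simp
    have h3 : γ * (s - b) / b ≤ c * b - c * s := by
      rw [div_le_iff₀ hb]
      nlinarith [mul_nonneg (sub_nonneg.2 hsb) (by linarith : (0:ℝ) ≤ c * b + γ)]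
    linarith
  · have hcb : c * b < -γ := by linarith [not_le.mp h]
    have hc : c < 0 := by nlinarith
    have hc' : c ≠ 0 := hc.ne
    have hu : 0 < (-c) * s / γ := div_pos (mul_pos (neg_pos.2 hc) hs) hγ
    have hv : (0:ℝ) < γ / (-(c * b)) := div_pos hγ (by linarith)
    have hprod : s / b = ((-c) * s / γ) * (γ / (-(c * b))) := by
      field_simp
    have hlogeq : Real.log (s / b) =
        Real.log ((-c) * s / γ) + Real.log (γ / (-(c * b))) := by
      rw [hprod, Real.log_mul hu.ne' hv.ne']
    have hlog : Real.log ((-c) * s / γ) ≤ (-c) * s / γ - 1 :=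
      Real.log_le_sub_one_of_pos hu
    have h4 : γ * Real.log ((-c) * s / γ) ≤ γ * ((-c) * s / γ - 1) := by nlinarith
    have h5 : γ * ((-c) * s / γ - 1) = (-c) * s - γ := by field_simp
    rw [hlogeq]
    nlinarith

/-- logarithmic penalty formula. The supremum, over `s` with `0 < s i ≤ b i`,
of `∑ i, (pε i · s i + γ·log(s i / b i) - p* i · s i)` equals
`∑ i, |pε i · b i - p* i · b i|_γ`, where `|x|_γ = x` if `x ≥ -γ` and
`|x|_γ = -γ + γ·log(γ/(-x))` otherwise. -/
theorem stmt13 (N : ℕ) (hN : 1 ≤ N) (γ : ℝ) (hγ : 0 < γ)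
    (b pe ps : Fin N → ℝ) (hb : ∀ i, 0 < b i) :
    IsLUB
      {y : ℝ | ∃ s : Fin N → ℝ, (∀ i, 0 < s i ∧ s i ≤ b i) ∧
        y = ∑ i, (pe i * s i + γ * Real.log (s i / b i) - ps i * s i)}
      (∑ i, (fun x : ℝ => if -γ ≤ x then x else -γ + γ * Real.log (γ / (-x)))
        (pe i * b i - ps i * b i)) := by
  set M : ℝ := ∑ i, (fun x : ℝ => if -γ ≤ x then x else -γ + γ * Real.log (γ / (-x)))
      (pe i * b i - ps i * b i) with hM
  have hub : ∀ y ∈ {y : ℝ | ∃ s : Fin N → ℝ, (∀ i, 0 < s i ∧ s i ≤ b i) ∧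
      y = ∑ i, (pe i * s i + γ * Real.log (s i / b i) - ps i * s i)}, y ≤ M := by
    rintro y ⟨s, hsb, rfl⟩
    apply Finset.sum_le_sum
    intro i _
    have h := stmt13_key (pe i - ps i) hγ (hb i) (hsb i).1 (hsb i).2
    have hx : (pe i - ps i) * b i = pe i * b i - ps i * b i := by ring
    rw [hx] at h
    simp only
    calc pe i * s i + γ * Real.log (s i / b i) - ps i * s i
        = (pe i - ps i) * s i + γ * Real.log (s i / b i) := by ring
      _ ≤ _ := h
  have hmem : M ∈ {y : ℝ | ∃ s : Fin N → ℝ, (∀ i, 0 < s i ∧ s i ≤ b i) ∧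
      y = ∑ i, (pe i * s i + γ * Real.log (s i / b i) - ps i * s i)} := by
    refine ⟨fun i => if -γ ≤ pe i * b i - ps i * b i then b i
        else γ / (-(pe i * b i - ps i * b i)) * b i, ?_, ?_⟩
    · intro i
      dsimp only
      split_ifs with h
      · exact ⟨hb i, le_refl _⟩
      · have hx : pe i * b i - ps i * b i < -γ := not_le.mp h
        have hxneg : 0 < -(pe i * b i - ps i * b i) := by linarith
        constructor
        · exact mul_pos (div_pos hγ hxneg) (hb i)
        · have : γ / (-(pe i * b i - ps i * b i)) ≤ 1 := by
            rw [div_le_one hxneg]; linarith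
          nlinarith [hb i]
    · rw [hM]
      apply Finset.sum_congr rfl
      intro i _
      dsimp only
      split_ifs with h
      · rw [div_self (hb i).ne', Real.log_one]
        ring
      · have hx : pe i * b i - ps i * b i < -γ := not_le.mp h
        have hxneg : 0 < -(pe i * b i - ps i * b i) := by linarith
        have h1 : γ / (-(pe i * b i - ps i * b i)) * b i / b i
            = γ / (-(pe i * b i - ps i * b i)) := by
          rw [mul_div_assoc, div_self (hb i).ne', mul_one]
        rw [h1]
        have h2 : pe i * (γ / (-(pe i * b i - ps i * b i)) * b i)
            - ps i * (γ / (-(pe i * b i - ps i * b i)) * b i) = -γ := by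
          have e1 : pe i * (γ / (-(pe i * b i - ps i * b i)) * b i)
              - ps i * (γ / (-(pe i * b i - ps i * b i)) * b i)
              = (pe i * b i - ps i * b i) * γ / (-(pe i * b i - ps i * b i)) := by
            ring
          rw [e1, div_eq_iff hxneg.ne']
          ring
        have : pe i * (γ / (-(pe i * b i - ps i * b i)) * b i)
            + γ * Real.log (γ / (-(pe i * b i - ps i * b i)))
            - ps i * (γ / (-(pe i * b i - ps i * b i)) * b i)
            = (pe i * (γ / (-(pe i * b i - ps i * b i)) * b i)
              - ps i * (γ / (-(pe i * b i - ps i * b i)) * b i))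
              + γ * Real.log (γ / (-(pe i * b i - ps i * b i))) := by ring
        rw [this, h2]
  exact ⟨hub, fun u hu => hu hmem⟩
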